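/- For every m ≥ 2 and M ≥ 0: S_M(m) = 2(2m−1)·S_M(m−1). -/
import Mathlib

/-- `S_M(m) := Σ_{r=0}^{M} (−1/4)^r · (2m+2r−1)! / (r!·(m+r−1)!) · C(m−1+M, m−1+r)`. -/
def Sdef (M m : ℕ) : ℚ :=
  ∑ r ∈ Finset.range (M + 1),
    (-1 / 4 : ℚ) ^ r * ((2 * m + 2 * r - 1).factorial : ℚ) /
        ((r.factorial : ℚ) * ((m + r - 1).factorial : ℚ)) *
      ((m - 1 + M).choose (m - 1 + r) : ℚ)

lemma Sdef_succ (M n : ℕ) : Sdef M (n + 1) =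
    ∑ r ∈ Finset.range (M + 1),
      (-1 / 4 : ℚ) ^ r * ((2 * n + 2 * r + 1).factorial : ℚ) /
          ((r.factorial : ℚ) * ((n + r).factorial : ℚ)) *
        ((n + M).choose (n + r) : ℚ) := by
  unfold Sdef
  refine Finset.sum_congr rfl fun r _ => ?_
  have h1 : 2 * (n + 1) + 2 * r - 1 = 2 * n + 2 * r + 1 := by omega
  have h2 : n + 1 + r - 1 = n + r := by omega
  have h3 : n + 1 - 1 + M = n + M := by omega
  have h4 : n + 1 - 1 + r = n + r := by omega
  rw [h1, h2, h3, h4]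

/-- The telescoping certificate. -/
noncomputable def gcert (M n r : ℕ) : ℚ :=
  -2 * r * (-1 / 4 : ℚ) ^ r * ((2 * n + 2 * r + 2).factorial : ℚ) *
      ((n + M + 1).choose (n + r + 1) : ℚ) /
    ((r.factorial : ℚ) * ((n + r).factorial : ℚ) * (n + M + 1))

set_option maxHeartbeats 1600000 in
lemma gcert_key (M n r : ℕ) (hr : r ≤ M) :
    (-1 / 4 : ℚ) ^ r * ((2 * (n + 1) + 2 * r + 1).factorial : ℚ) /
          ((r.factorial : ℚ) * (((n + 1) + r).factorial : ℚ)) *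
        (((n + 1) + M).choose ((n + 1) + r) : ℚ)
      - 2 * (2 * (n : ℚ) + 3) *
        ((-1 / 4 : ℚ) ^ r * ((2 * n + 2 * r + 1).factorial : ℚ) /
            ((r.factorial : ℚ) * ((n + r).factorial : ℚ)) *
          ((n + M).choose (n + r) : ℚ))
      = gcert M n (r + 1) - gcert M n r := by
  unfold gcert
  have e1 : 2 * n + 2 * (r + 1) + 2 = 2 * n + 2 * r + 4 := by ring
  have e2 : n + (r + 1) = n + r + 1 := by ring
  have e4 : 2 * (n + 1) + 2 * r + 1 = 2 * n + 2 * r + 3 := by ring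
  have e5 : (n + 1) + r = n + r + 1 := by ring
  have e6 : (n + 1) + M = n + M + 1 := by ring
  rw [e1, e2, e4, e5, e6, show n + r + 1 + 1 = n + r + 2 by omega]
  -- factorial expansions
  have hf1 : ((2 * n + 2 * r + 3).factorial : ℚ)
      = (2 * n + 2 * r + 3) * (2 * n + 2 * r + 2) * ((2 * n + 2 * r + 1).factorial : ℚ) := by
    rw [show 2 * n + 2 * r + 3 = (2 * n + 2 * r + 1) + 1 + 1 by omega,
      Nat.factorial_succ, Nat.factorial_succ]
    push_cast; ring
  have hf2 : ((2 * n + 2 * r + 4).factorial : ℚ)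
      = (2 * n + 2 * r + 4) * (2 * n + 2 * r + 3) * (2 * n + 2 * r + 2)
          * ((2 * n + 2 * r + 1).factorial : ℚ) := by
    rw [show 2 * n + 2 * r + 4 = (2 * n + 2 * r + 3) + 1 by omega, Nat.factorial_succ]
    push_cast [hf1]; ring
  have hf3 : ((n + r + 1).factorial : ℚ) = (n + r + 1) * ((n + r).factorial : ℚ) := by
    rw [Nat.factorial_succ]; push_cast; ring
  have hf4 : ((r + 1).factorial : ℚ) = (r + 1) * (r.factorial : ℚ) := by
    rw [Nat.factorial_succ]; push_cast; ring
  -- choose relations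
  have hc1 : ((n + M + 1).choose (n + r + 2) : ℚ) * (n + r + 2)
      = ((n + M + 1).choose (n + r + 1) : ℚ) * ((M : ℚ) - r) := by
    have h := Nat.choose_succ_right_eq (n + M + 1) (n + r + 1)
    rw [show n + M + 1 - (n + r + 1) = M - r by omega,
      show n + r + 1 + 1 = n + r + 2 by omega] at h
    have h2 := congrArg (fun x : ℕ => (x : ℚ)) h
    push_cast [Nat.cast_sub hr] at h2
    linarith [h2]
  have hc2 : ((n + M + 1).choose (n + r + 1) : ℚ) * (n + r + 1)
      = ((n + M : ℚ) + 1) * ((n + M).choose (n + r) : ℚ) := by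
    have h := Nat.add_one_mul_choose_eq (n + M) (n + r)
    have h2 := congrArg (fun x : ℕ => (x : ℚ)) h
    push_cast [Nat.succ_eq_add_one] at h2
    linarith [h2]
  -- nonzeroness
  have hne1 : (r.factorial : ℚ) ≠ 0 := by exact_mod_cast (Nat.factorial_pos r).ne'
  have hne2 : ((n + r).factorial : ℚ) ≠ 0 := by exact_mod_cast (Nat.factorial_pos _).ne'
  have hne3 : ((n + M : ℚ) + 1) ≠ 0 := by positivity
  have hne4 : ((n + r : ℚ) + 1) ≠ 0 := by positivity
  have hne5 : ((n + r : ℚ) + 2) ≠ 0 := by positivity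
  -- express the other chooses in terms of c1
  have hC0 : ((n + M).choose (n + r) : ℚ)
      = ((n + M + 1).choose (n + r + 1) : ℚ) * (n + r + 1) / ((n + M : ℚ) + 1) := by
    field_simp
    linarith [hc2]
  have hC2 : ((n + M + 1).choose (n + r + 2) : ℚ)
      = ((n + M + 1).choose (n + r + 1) : ℚ) * ((M : ℚ) - r) / ((n + r : ℚ) + 2) := by
    field_simp
    push_cast at hc1 ⊢
    linarith [hc1]
  have hf0 : ((2 * n + 2 * r + 2).factorial : ℚ)
      = (2 * n + 2 * r + 2) * ((2 * n + 2 * r + 1).factorial : ℚ) := by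
    rw [show 2 * n + 2 * r + 2 = (2 * n + 2 * r + 1) + 1 by omega, Nat.factorial_succ]
    push_cast; ring
  rw [hf1, hf2, hf3, hf4, hf0, hC0, hC2, pow_succ]
  push_cast
  generalize ((-1 / 4 : ℚ) ^ r) = p
  generalize (((2 * n + 2 * r + 1).factorial : ℚ)) = F1 at hne1 hne2 ⊢
  generalize ((r.factorial : ℚ)) = F2 at hne1 ⊢
  generalize (((n + r).factorial : ℚ)) = F3 at hne2 ⊢
  generalize (((n + M + 1).choose (n + r + 1) : ℚ)) = c
  field_simp
  ring

/-- For every `m ≥ 2` and `M ≥ 0`: `S_M(m) = 2(2m−1)·S_M(m−1)`. -/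
theorem stmt_15 (m M : ℕ) (hm : 2 ≤ m) :
    Sdef M m = 2 * (2 * (m : ℚ) - 1) * Sdef M (m - 1) := by
  obtain ⟨n, rfl⟩ : ∃ n, m = n + 2 := ⟨m - 2, by omega⟩
  have hsub : n + 2 - 1 = n + 1 := by omega
  rw [hsub]
  have hcast : 2 * (2 * ((n : ℚ) + 2) - 1) = 2 * (2 * (n : ℚ) + 3) := by ring
  push_cast
  rw [hcast]
  rw [show n + 2 = (n + 1) + 1 from rfl, Sdef_succ, Sdef_succ]
  rw [eq_comm, ← sub_eq_zero, ← neg_sub, neg_eq_zero]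
  rw [Finset.mul_sum, ← Finset.sum_sub_distrib]
  rw [Finset.sum_congr rfl (fun r hr => gcert_key M n r (by
    have := Finset.mem_range.mp hr; omega))]
  rw [Finset.sum_range_sub (gcert M n)]
  have h0 : gcert M n 0 = 0 := by simp [gcert]
  have hM : gcert M n (M + 1) = 0 := by
    unfold gcert
    rw [Nat.choose_eq_zero_of_lt (by omega)]
    simp
  rw [h0, hM, sub_zero]
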